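/- Let A be a bounded self-adjoint positive semidefinite operator on a Hilbert space H, let φ ∈ H and a > 0 satisfy ‖φ‖ ≤ a‖Aφ‖. Then for every k of the form k = 2^l with l ∈ ℕ, ‖φ‖ ≤ a^k‖A^k φ‖. -/

import Mathlib

/-- If `A` is a bounded self-adjoint positive semidefinite operator on a
complex Hilbert space `H`, `φ ∈ H`, `a > 0` and `‖φ‖ ≤ a‖Aφ‖`, then for every `k = 2^l`,
`‖φ‖ ≤ a^k‖A^k φ‖`. -/
theorem stmt_1 {H : Type*} [NormedAddCommGroup H] [InnerProductSpace ℂ H] [CompleteSpace H]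
    (A : H →L[ℂ] H) (hA : A.IsPositive) (φ : H) (a : ℝ) (ha : 0 < a)
    (h : ‖φ‖ ≤ a * ‖A φ‖) :
    ∀ l : ℕ, ‖φ‖ ≤ a ^ (2 ^ l) * ‖(A ^ (2 ^ l)) φ‖ := by
  intro l
  induction l with
  | zero => simpa using h
  | succ l ih =>
    by_cases hφ : φ = 0
    · simp [hφ]
    have hφn : 0 < ‖φ‖ := norm_pos_iff.mpr hφ
    set B := A ^ (2 ^ l) with hBdef
    have hB : IsSelfAdjoint B := hA.isSelfAdjoint.pow _
    have h2 : (inner ℂ (B φ) (B φ) : ℂ) = (inner ℂ φ (B (B φ)) : ℂ) := hB.isSymmetric φ (B φ)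
    have key : ‖B φ‖ ^ 2 ≤ ‖φ‖ * ‖B (B φ)‖ := by
      have h1 : (‖B φ‖ : ℝ) ^ 2 = RCLike.re ((inner ℂ (B φ) (B φ) : ℂ)) := by
        rw [inner_self_eq_norm_sq]
      rw [h1, h2]
      calc RCLike.re ((inner ℂ φ (B (B φ)) : ℂ)) ≤ ‖((inner ℂ φ (B (B φ)) : ℂ))‖ := RCLike.re_le_norm _
        _ ≤ ‖φ‖ * ‖B (B φ)‖ := norm_inner_le_norm _ _
    have hpow : (A ^ (2 ^ (l + 1))) φ = B (B φ) := by
      rw [pow_succ, pow_mul, sq]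
      rfl
    rw [hpow, pow_succ, pow_mul]
    have hc : 0 < a ^ 2 ^ l := pow_pos ha _
    nlinarith [ih, key, hc, hφn, norm_nonneg (B φ), norm_nonneg (B (B φ)), sq_nonneg (a ^ 2 ^ l)]
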